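/- For n ≥ 1 and 0 ≤ j < 2^{n−1}, let I_{n,2j} := [2j·2^{−n}, (2j+1)·2^{−n}) and I_{n,2j+1} := [(2j+1)·2^{−n}, (2j+2)·2^{−n}) be the two halves of the dyadic interval [2j·2^{−(n−1)}, (2j+1)·2^{−(n−1)}) ⊆ [0,1). Then the set {(x,y) ∈ [0,1)×[0,1) : x ≠ y} is the pairwise disjoint union, over all n ≥ 1 and 0 ≤ j < 2^{n−1}, of the sets (I_{n,2j}×I_{n,2j+1}) ∪ (I_{n,2j+1}×I_{n,2j}). Consequently, for every Borel measure μ on ℝ², μ({(x,y) ∈ [0,1)² : x ≠ y}) = Σ_{n≥1} Σ_{0≤j<2^{n−1}} ( μ(I_{n,2j}×I_{n,2j+1}) + μ(I_{n,2j+1}×I_{n,2j}) ). -/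

import Mathlib

open MeasureTheory Set

noncomputable section

/-- The dyadic interval `I_{n,k} = [k·2^{-n}, (k+1)·2^{-n}) ⊆ [0,1)`. -/
def dyadicI (n k : ℕ) : Set ℝ :=
  Set.Ico ((k : ℝ) * (2 : ℝ) ^ (-(n : ℤ))) (((k : ℝ) + 1) * (2 : ℝ) ^ (-(n : ℤ)))

/-- The union `(I_{n,2j} × I_{n,2j+1}) ∪ (I_{n,2j+1} × I_{n,2j})` of the two products
of the sibling halves of a dyadic interval of generation `n-1`. -/
def dyadicPair (n j : ℕ) : Set (ℝ × ℝ) :=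
  (dyadicI n (2 * j)) ×ˢ (dyadicI n (2 * j + 1)) ∪
    (dyadicI n (2 * j + 1)) ×ˢ (dyadicI n (2 * j))

lemma mem_dyadicI {n k : ℕ} {x : ℝ} :
    x ∈ dyadicI n k ↔ ⌊x * 2 ^ n⌋ = (k : ℤ) := by
  have h2 : (0:ℝ) < 2 ^ n := by positivity
  rw [dyadicI, Set.mem_Ico, Int.floor_eq_iff, zpow_neg, zpow_natCast,
      ← div_eq_mul_inv, ← div_eq_mul_inv, div_le_iff₀ h2, lt_div_iff₀ h2]
  push_cast
  constructor <;> rintro ⟨h1, h3⟩ <;> constructor <;> linarith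

lemma floor_half (a : ℝ) : ⌊a / 2⌋ = ⌊a⌋ / 2 := by
  have h1 := Int.floor_le a
  have h2 := Int.lt_floor_add_one a
  have h3 : 2 * (⌊a⌋ / 2) ≤ ⌊a⌋ ∧ ⌊a⌋ < 2 * (⌊a⌋ / 2) + 2 := by omega
  rw [Int.floor_eq_iff]
  have c1 : ((2 * (⌊a⌋ / 2) : ℤ) : ℝ) ≤ (⌊a⌋ : ℝ) := by exact_mod_cast h3.1
  have h4 : ⌊a⌋ + 1 ≤ 2 * (⌊a⌋ / 2) + 2 := by omega
  have c2 : ((⌊a⌋ + 1 : ℤ) : ℝ) ≤ ((2 * (⌊a⌋ / 2) + 2 : ℤ) : ℝ) := by exact_mod_cast h4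
  push_cast at c1 c2 ⊢
  constructor <;> linarith

lemma floor_pow_half (x : ℝ) (n : ℕ) : ⌊x * 2 ^ n⌋ = ⌊x * 2 ^ (n+1)⌋ / 2 := by
  have : x * 2 ^ n = x * 2 ^ (n+1) / 2 := by ring
  rw [this, floor_half]

lemma floor_eq_down {x y : ℝ} {n : ℕ} : ∀ m, n ≤ m →
    ⌊x * 2 ^ m⌋ = ⌊y * 2 ^ m⌋ → ⌊x * 2 ^ n⌋ = ⌊y * 2 ^ n⌋ := by
  intro m hnm
  induction m, hnm using Nat.le_induction with
  | base => exact id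
  | succ m hm ih =>
    intro h
    exact ih (by rw [floor_pow_half x m, floor_pow_half y m, h])

lemma pair_floors {n j : ℕ} {q : ℝ × ℝ} (hq : q ∈ dyadicPair (n+1) j) :
    (⌊q.1 * 2 ^ (n+1)⌋ = 2*(j:ℤ) ∧ ⌊q.2 * 2 ^ (n+1)⌋ = 2*(j:ℤ)+1) ∨
    (⌊q.1 * 2 ^ (n+1)⌋ = 2*(j:ℤ)+1 ∧ ⌊q.2 * 2 ^ (n+1)⌋ = 2*(j:ℤ)) := by
  rcases hq with h | h <;> obtain ⟨h1, h2⟩ := h <;>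
    rw [mem_dyadicI] at h1 h2 <;> push_cast at h1 h2 <;> [left; right] <;>
    exact ⟨h1, h2⟩

lemma pair_floor_parent {n j : ℕ} {q : ℝ × ℝ} (hq : q ∈ dyadicPair (n+1) j) :
    ⌊q.1 * 2 ^ n⌋ = (j:ℤ) ∧ ⌊q.2 * 2 ^ n⌋ = (j:ℤ) := by
  have h := pair_floors hq
  have e1 := floor_pow_half q.1 n
  have e2 := floor_pow_half q.2 n
  omega

lemma pair_disjoint_le {n j m i : ℕ} (hnm : n ≤ m) (hne : (n, j) ≠ (m, i)) :
    Disjoint (dyadicPair (n+1) j) (dyadicPair (m+1) i) := by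
  rw [Set.disjoint_left]
  intro q hq1 hq2
  have f1 := pair_floors hq1
  have f2 := pair_floors hq2
  rcases eq_or_lt_of_le hnm with rfl | hlt
  · have : j = i := by omega
    exact hne (by rw [this])
  · have p2 := pair_floor_parent hq2
    have hdown := floor_eq_down (x := q.1) (y := q.2) (n := n+1) m hlt
      (p2.1.trans p2.2.symm)
    omega

lemma pair_disjoint {n j m i : ℕ} (hne : (n, j) ≠ (m, i)) :
    Disjoint (dyadicPair (n+1) j) (dyadicPair (m+1) i) := by
  rcases le_total n m with h | h
  · exact pair_disjoint_le h hne
  · exact (pair_disjoint_le h hne.symm).symm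

lemma dyadicI_subset {n k : ℕ} (hk : k < 2^n) : dyadicI n k ⊆ Set.Ico (0:ℝ) 1 := by
  intro x hx
  rw [mem_dyadicI] at hx
  have h2 : (0:ℝ) < 2 ^ n := by positivity
  have h1 : ((k:ℤ):ℝ) ≤ x * 2^n := hx ▸ Int.floor_le _
  have h3 : x * 2^n < (k:ℝ) + 1 := by
    have := Int.lt_floor_add_one (x * 2^n)
    rw [hx] at this; push_cast at this; exact this
  have hk0 : (0:ℝ) ≤ (k:ℝ) := by positivity
  have hk' : (k:ℝ) + 1 ≤ 2^n := by exact_mod_cast hk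
  push_cast at h1
  constructor
  · nlinarith
  · nlinarith

lemma floor_lt_of_lt {x y : ℝ} (h : x < y) : ∃ n : ℕ, ⌊x * 2 ^ n⌋ < ⌊y * 2 ^ n⌋ := by
  obtain ⟨n, hn⟩ := pow_unbounded_of_one_lt (R := ℝ) (1/(y-x)) one_lt_two
  refine ⟨n, ?_⟩
  have hpos : (0:ℝ) < y - x := by linarith
  rw [div_lt_iff₀ hpos] at hn
  have h2 := Int.floor_le (x * 2^n)
  have h3 : (⌊x * 2^n⌋ : ℝ) + 1 ≤ y * 2^n := by nlinarith
  have h4 : ⌊x * 2^n⌋ + 1 ≤ ⌊y * 2^n⌋ := Int.le_floor.mpr (by push_cast; linarith)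
  omega

lemma exists_floor_ne {x y : ℝ} (hne : x ≠ y) :
    ∃ n : ℕ, ⌊x * 2 ^ n⌋ ≠ ⌊y * 2 ^ n⌋ := by
  rcases lt_or_gt_of_ne hne with h | h
  · obtain ⟨n, hn⟩ := floor_lt_of_lt h; exact ⟨n, by omega⟩
  · obtain ⟨n, hn⟩ := floor_lt_of_lt h; exact ⟨n, by omega⟩

/-- The dyadic decomposition of the off-diagonal part of `[0,1)²`: it is the pairwise
disjoint union, over `n ≥ 1` and `0 ≤ j < 2^{n-1}`, of the sets
`(I_{n,2j} × I_{n,2j+1}) ∪ (I_{n,2j+1} × I_{n,2j})`; consequently, every Borel measure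
`μ` on `ℝ²` satisfies
`μ({(x,y) ∈ [0,1)² : x ≠ y}) = Σ_{n≥1} Σ_{j<2^{n-1}} (μ(I_{n,2j}×I_{n,2j+1}) + μ(I_{n,2j+1}×I_{n,2j}))`. -/
theorem dyadic_offdiagonal_decomposition :
    (Set.PairwiseDisjoint {p : ℕ × ℕ | 1 ≤ p.1 ∧ p.2 < 2 ^ (p.1 - 1)}
      (fun p => dyadicPair p.1 p.2)) ∧
    (⋃ p ∈ {p : ℕ × ℕ | 1 ≤ p.1 ∧ p.2 < 2 ^ (p.1 - 1)}, dyadicPair p.1 p.2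
      = {q : ℝ × ℝ | q.1 ∈ Set.Ico (0 : ℝ) 1 ∧ q.2 ∈ Set.Ico (0 : ℝ) 1 ∧ q.1 ≠ q.2}) ∧
    (∀ μ : Measure (ℝ × ℝ),
      μ {q : ℝ × ℝ | q.1 ∈ Set.Ico (0 : ℝ) 1 ∧ q.2 ∈ Set.Ico (0 : ℝ) 1 ∧ q.1 ≠ q.2}
        = ∑' n : ℕ, ∑ j ∈ Finset.range (2 ^ n),
            (μ ((dyadicI (n + 1) (2 * j)) ×ˢ (dyadicI (n + 1) (2 * j + 1)))
              + μ ((dyadicI (n + 1) (2 * j + 1)) ×ˢ (dyadicI (n + 1) (2 * j))))) := by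
  classical
  -- pairwise disjointness
  have hpd : Set.PairwiseDisjoint {p : ℕ × ℕ | 1 ≤ p.1 ∧ p.2 < 2 ^ (p.1 - 1)}
      (fun p => dyadicPair p.1 p.2) := by
    rintro ⟨n, j⟩ ⟨hn1, hn2⟩ ⟨m, i⟩ ⟨hm1, hm2⟩ hne
    obtain ⟨n', rfl⟩ : ∃ n', n = n' + 1 := ⟨n - 1, by omega⟩
    obtain ⟨m', rfl⟩ : ∃ m', m = m' + 1 := ⟨m - 1, by omega⟩
    have hne' : (n', j) ≠ (m', i) := by
      intro h
      apply hne
      rw [Prod.mk.injEq] at h ⊢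
      exact ⟨by omega, h.2⟩
    exact pair_disjoint hne'
  have hunion : (⋃ p ∈ {p : ℕ × ℕ | 1 ≤ p.1 ∧ p.2 < 2 ^ (p.1 - 1)}, dyadicPair p.1 p.2)
      = {q : ℝ × ℝ | q.1 ∈ Set.Ico (0 : ℝ) 1 ∧ q.2 ∈ Set.Ico (0 : ℝ) 1 ∧ q.1 ≠ q.2} := by
    ext q
    simp only [Set.mem_iUnion, Set.mem_setOf_eq, exists_prop, Prod.exists]
    constructor
    · rintro ⟨n, j, ⟨hn1, hj⟩, hq⟩
      obtain ⟨n', rfl⟩ : ∃ n', n = n' + 1 := ⟨n - 1, by omega⟩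
      have hj' : j < 2 ^ n' := by simpa using hj
      have hb : 2 ^ (n' + 1) = 2 * 2 ^ n' := by ring
      have hb1 : 2 * j < 2 ^ (n' + 1) := by omega
      have hb2 : 2 * j + 1 < 2 ^ (n' + 1) := by omega
      have hne : q.1 ≠ q.2 := by
        intro heq
        have := pair_floors hq
        rw [heq] at this
        omega
      rcases hq with hh | hh <;> obtain ⟨h1, h2⟩ := hh
      · exact ⟨dyadicI_subset hb1 h1, dyadicI_subset hb2 h2, hne⟩
      · exact ⟨dyadicI_subset hb2 h1, dyadicI_subset hb1 h2, hne⟩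
    · rintro ⟨hx, hy, hne⟩
      have hex := exists_floor_ne hne
      have hN := Nat.find_spec hex
      have hN0 : ⌊q.1 * 2 ^ (0:ℕ)⌋ = ⌊q.2 * 2 ^ (0:ℕ)⌋ := by
        simp only [pow_zero, mul_one]
        rw [Int.floor_eq_zero_iff.mpr hx, Int.floor_eq_zero_iff.mpr hy]
      have hNpos : Nat.find hex ≠ 0 := fun h => (h ▸ hN) hN0
      obtain ⟨M, hM⟩ : ∃ M, Nat.find hex = M + 1 := ⟨Nat.find hex - 1, by omega⟩
      rw [hM] at hN
      have hMeq : ⌊q.1 * 2 ^ M⌋ = ⌊q.2 * 2 ^ M⌋ := by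
        have := Nat.find_min hex (m := M) (by omega)
        exact not_not.mp this
      have e1 := floor_pow_half q.1 M
      have e2 := floor_pow_half q.2 M
      set j' := ⌊q.1 * 2 ^ M⌋ with hj'def
      have hj0 : 0 ≤ j' := Int.floor_nonneg.mpr (mul_nonneg hx.1 (by positivity))
      have hjlt : j' < 2 ^ M := by
        apply Int.floor_lt.mpr
        push_cast
        have h2 : (0:ℝ) < (2:ℝ) ^ M := by positivity
        nlinarith [hx.2]
      refine ⟨M + 1, j'.toNat, ⟨by omega, ?_⟩, ?_⟩
      · simp only [Nat.add_sub_cancel]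
        have : ((2 ^ M : ℕ) : ℤ) = 2 ^ M := by push_cast; ring
        omega
      · have hc : ((j'.toNat : ℕ) : ℤ) = j' := Int.toNat_of_nonneg hj0
        have key : (⌊q.1 * 2 ^ (M+1)⌋ = 2*j' ∧ ⌊q.2 * 2 ^ (M+1)⌋ = 2*j'+1) ∨
            (⌊q.1 * 2 ^ (M+1)⌋ = 2*j'+1 ∧ ⌊q.2 * 2 ^ (M+1)⌋ = 2*j') := by omega
        rcases key with ⟨k1, k2⟩ | ⟨k1, k2⟩
        · exact Or.inl ⟨mem_dyadicI.mpr (by push_cast [hc]; omega),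
            mem_dyadicI.mpr (by push_cast [hc]; omega)⟩
        · exact Or.inr ⟨mem_dyadicI.mpr (by push_cast [hc]; omega),
            mem_dyadicI.mpr (by push_cast [hc]; omega)⟩
  refine ⟨hpd, hunion, ?_⟩
  intro μ
  have hImeas : ∀ n k, MeasurableSet (dyadicI n k) := fun n k => measurableSet_Ico
  have hPmeas : ∀ n j, MeasurableSet (dyadicPair n j) := fun n j =>
    ((hImeas _ _).prod (hImeas _ _)).union ((hImeas _ _).prod (hImeas _ _))
  have hset : {q : ℝ × ℝ | q.1 ∈ Set.Ico (0 : ℝ) 1 ∧ q.2 ∈ Set.Ico (0 : ℝ) 1 ∧ q.1 ≠ q.2}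
      = ⋃ n : ℕ, ⋃ j ∈ Finset.range (2 ^ n), dyadicPair (n+1) j := by
    rw [← hunion]
    ext q
    simp only [Set.mem_iUnion, Set.mem_setOf_eq, exists_prop, Prod.exists, Finset.mem_range]
    constructor
    · rintro ⟨n, j, ⟨h1, h2⟩, hq⟩
      obtain ⟨n', rfl⟩ : ∃ n', n = n' + 1 := ⟨n - 1, by omega⟩
      exact ⟨n', j, by simpa using h2, hq⟩
    · rintro ⟨n, j, hj, hq⟩
      exact ⟨n + 1, j, ⟨by omega, by simpa using hj⟩, hq⟩
  rw [hset]
  have hUdisj : Pairwise (Function.onFun Disjoint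
      (fun n => ⋃ j ∈ Finset.range (2 ^ n), dyadicPair (n+1) j)) := by
    intro n m hnm
    rw [Function.onFun, Set.disjoint_left]
    intro q hq1 hq2
    simp only [Set.mem_iUnion, exists_prop, Finset.mem_range] at hq1 hq2
    obtain ⟨j, _, hj⟩ := hq1
    obtain ⟨i, _, hi⟩ := hq2
    exact Set.disjoint_left.mp (pair_disjoint (fun h => hnm (congrArg Prod.fst h))) hj hi
  rw [measure_iUnion hUdisj
    (fun n => (Finset.range (2^n)).measurableSet_biUnion (fun j _ => hPmeas _ _))]
  refine tsum_congr fun n => ?_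
  have hfd : Set.PairwiseDisjoint ↑(Finset.range (2^n))
      (fun j => dyadicPair (n+1) j) := by
    intro j _ i _ hne
    exact pair_disjoint (fun h => hne (congrArg Prod.snd h))
  rw [measure_biUnion_finset hfd (fun j _ => hPmeas _ _)]
  refine Finset.sum_congr rfl fun j _ => ?_
  have hI : Disjoint (dyadicI (n+1) (2*j)) (dyadicI (n+1) (2*j+1)) := by
    rw [Set.disjoint_left]
    intro x h1 h2
    rw [mem_dyadicI] at h1 h2
    push_cast at h1 h2
    omega
  have hprod : Disjoint (dyadicI (n+1) (2*j) ×ˢ dyadicI (n+1) (2*j+1))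
      (dyadicI (n+1) (2*j+1) ×ˢ dyadicI (n+1) (2*j)) := by
    rw [Set.disjoint_left]
    intro q hq hq'
    exact Set.disjoint_left.mp hI hq.1 hq'.1
  rw [dyadicPair, measure_union hprod ((hImeas _ _).prod (hImeas _ _))]
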